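/- Assume n ≥ 1, m ≥ 1, and the Tanner graph of H is connected (the bipartite graph on vertex set {u_1,…,u_n} ∪ {v_1,…,v_m} with an edge between u_i and v_j iff H_{j,i} ≠ 0 is connected). Let (h, z) be an LP pseudocodeword. Then there exists a nonnegative integer M such that ∑_{α∈R} h_i(α) = M for every i ∈ {1,…,n}. -/
import Mathlib


open Finset

/-- The tuple of sets `X_j(c)`: for each symbol `α`, the set of positions `i` in the
support of the `j`-th row of `H` where `c i = α`. -/
def Xj {R : Type} [Ring R] [DecidableEq R] {n m : ℕ} (H : Fin m → Fin n → R) (j : Fin m)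
    (c : Fin n → R) : R → Finset (Fin n) :=
  fun α => univ.filter (fun i => H j i ≠ 0 ∧ c i = α)

/-- The set `E_j` of all tuples `X_j(c)` arising from words `c` satisfying parity check `j`. -/
def Ej {R : Type} [Ring R] [Fintype R] [DecidableEq R] {n m : ℕ} (H : Fin m → Fin n → R)
    (j : Fin m) : Finset (R → Finset (Fin n)) :=
  (univ.filter (fun c : Fin n → R => ∑ i, H j i * c i = 0)).image (Xj H j)

/-- Membership in the relaxed LP polytope `Q`. -/
def MemQ {R : Type} [Ring R] [Fintype R] [DecidableEq R] {n m : ℕ} (H : Fin m → Fin n → R)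
    (f : Fin n → R → ℝ) (w : Fin m → (R → Finset (Fin n)) → ℝ) : Prop :=
  (∀ j : Fin m, ∀ S ∈ Ej H j, 0 ≤ w j S ∧ w j S ≤ 1) ∧
  (∀ j : Fin m, ∑ S ∈ Ej H j, w j S = 1) ∧
  (∀ j : Fin m, ∀ i : Fin n, H j i ≠ 0 → ∀ α : R, α ≠ 0 →
    f i α = ∑ S ∈ (Ej H j).filter (fun S => i ∈ S α), w j S)

/-- LP pseudocodeword: nonnegative integer vectors `(h, z)` satisfying the defining equations. -/
def IsLPPseudocodeword {R : Type} [Ring R] [Fintype R] [DecidableEq R] {n m : ℕ}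
    (H : Fin m → Fin n → R) (h : Fin n → R → ℤ)
    (z : Fin m → (R → Finset (Fin n)) → ℤ) : Prop :=
  (∀ i α, 0 ≤ h i α) ∧
  (∀ j : Fin m, ∀ S ∈ Ej H j, 0 ≤ z j S) ∧
  (∀ j : Fin m, ∀ i : Fin n, H j i ≠ 0 →
    (∀ α : R, α ≠ 0 → h i α = ∑ S ∈ (Ej H j).filter (fun S => i ∈ S α), z j S) ∧
    h i 0 = ∑ S ∈ (Ej H j).filter (fun S => ∀ α : R, α ≠ 0 → i ∉ S α), z j S)

/-- The embedding of a word `c ∈ Rⁿ` as the point `(ξ(c₁) | … | ξ(c_n))`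
(indicator coordinates for the nonzero symbols). -/
def xiEmb {R : Type} [Zero R] [DecidableEq R] {n : ℕ} (c : Fin n → R) : Fin n → R → ℝ :=
  fun i α => if α ≠ 0 ∧ c i = α then 1 else 0

/-- The linear cost function `λ · fᵀ = ∑_i ∑_{α ∈ R⁻} λ_i^{(α)} f_i^{(α)}`. -/
def costQ {R : Type} [Zero R] [Fintype R] [DecidableEq R] {n : ℕ}
    (lam f : Fin n → R → ℝ) : ℝ :=
  ∑ i, ∑ α ∈ univ.filter (fun α : R => α ≠ 0), lam i α * f i α

/-- Connectedness of the Tanner graph of `H`: the bipartite graph on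
`{u_1,…,u_n} ∪ {v_1,…,v_m}` with `u_i ~ v_j` iff `H j i ≠ 0`. -/
def TannerConnected {R : Type} [Zero R] {n m : ℕ} (H : Fin m → Fin n → R) : Prop :=
  (SimpleGraph.fromRel (fun x y : Fin n ⊕ Fin m =>
      ∃ i j, x = Sum.inl i ∧ y = Sum.inr j ∧ H j i ≠ 0)).Connected

/-- Graph-cover pseudocodeword for the `M`-cover specified by permutations `σ`. -/
def IsGCPseudocodeword {R : Type} [Ring R] [DecidableEq R] {n m : ℕ}
    (H : Fin m → Fin n → R) (M : ℕ) (σ : Fin m → Fin n → Equiv.Perm (Fin M))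
    (p : Fin n → Fin M → R) : Prop :=
  ∀ (j : Fin m) (ℓ : Fin M),
    ∑ i ∈ univ.filter (fun i => H j i ≠ 0), H j i * p i (σ j i ℓ) = 0

lemma const_of_connected' {V : Type} {G : SimpleGraph V} (hc : G.Connected)
    {F : V → ℤ} (hF : ∀ u v, G.Adj u v → F u = F v) (u v : V) : F u = F v := by
  obtain ⟨w⟩ := hc u v
  induction w with
  | nil => rfl
  | cons hadj p ih => exact (hF _ _ hadj).trans ih
/-- if the Tanner graph of `H` is connected, then for an LP pseudocodeword
`(h, z)` there is a nonnegative integer `M` with `∑_{α∈R} h_i(α) = M` for every `i`. -/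
theorem stmt11 {R : Type} [Ring R] [Fintype R] [DecidableEq R] {n m : ℕ}
    (hn : 0 < n) (hm : 0 < m)
    (H : Fin m → Fin n → R) (hconn : TannerConnected H)
    (h : Fin n → R → ℤ) (z : Fin m → (R → Finset (Fin n)) → ℤ)
    (hpc : IsLPPseudocodeword H h z) :
    ∃ M : ℕ, ∀ i : Fin n, ∑ α : R, h i α = (M : ℤ) := by
  obtain ⟨hnn, hznn, heq⟩ := hpc
  -- Key: if `H j i ≠ 0` then the total mass at `i` equals the total `z`-mass at `j`.
  have key : ∀ j i, H j i ≠ 0 → ∑ α : R, h i α = ∑ S ∈ Ej H j, z j S := by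
    intro j i hij
    obtain ⟨hα, h0⟩ := heq j i hij
    have step : ∀ S ∈ Ej H j,
        (∑ α ∈ univ.erase (0:R), if i ∈ S α then z j S else 0)
          = if ¬ (∀ α : R, α ≠ 0 → i ∉ S α) then z j S else 0 := by
      intro S hS
      simp only [Ej, mem_image, mem_filter] at hS
      obtain ⟨c, -, rfl⟩ := hS
      by_cases hci : c i = 0
      · rw [Finset.sum_eq_zero, if_neg]
        · push_neg
          intro α hα0 hmem
          simp only [Xj, mem_filter] at hmem
          exact hα0 (hci ▸ hmem.2.2.symm)
        · intro α hαmem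
          rw [if_neg]
          simp only [Xj, mem_filter]
          rintro ⟨-, -, rfl⟩
          exact (Finset.mem_erase.mp hαmem).1 hci
      · have hmem : i ∈ Xj H j c (c i) := by simp [Xj, hij]
        have hneg : ¬ ∀ α : R, α ≠ 0 → i ∉ Xj H j c α := fun hall => hall (c i) hci hmem
        rw [Finset.sum_eq_single (c i)
            (fun b _ hbne => by
              rw [if_neg]
              simp only [Xj, mem_filter]
              rintro ⟨-, -, rfl⟩
              exact hbne rfl)
            (fun hci' => absurd (Finset.mem_erase.mpr ⟨hci, mem_univ _⟩) hci'),
          if_pos hmem, if_pos hneg]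
    calc ∑ α : R, h i α = h i 0 + ∑ α ∈ univ.erase (0:R), h i α :=
          (Finset.add_sum_erase _ _ (mem_univ 0)).symm
    _ = (∑ S ∈ (Ej H j).filter (fun S => ∀ α : R, α ≠ 0 → i ∉ S α), z j S)
          + ∑ S ∈ (Ej H j).filter (fun S => ¬ ∀ α : R, α ≠ 0 → i ∉ S α), z j S := by
        rw [h0]
        congr 1
        calc ∑ α ∈ univ.erase (0:R), h i α
            = ∑ α ∈ univ.erase (0:R), ∑ S ∈ Ej H j, if i ∈ S α then z j S else 0 := by
              refine Finset.sum_congr rfl fun α hαmem => ?_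
              rw [hα α (Finset.mem_erase.mp hαmem).1, Finset.sum_filter]
        _ = ∑ S ∈ Ej H j, ∑ α ∈ univ.erase (0:R), if i ∈ S α then z j S else 0 :=
              Finset.sum_comm
        _ = ∑ S ∈ Ej H j, if ¬ (∀ α : R, α ≠ 0 → i ∉ S α) then z j S else 0 :=
              Finset.sum_congr rfl step
        _ = _ := (Finset.sum_filter _ _).symm
    _ = ∑ S ∈ Ej H j, z j S := Finset.sum_filter_add_sum_filter_not _ _ _
  -- Propagate along the connected Tanner graph.
  set F : Fin n ⊕ Fin m → ℤ := fun v =>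
    Sum.elim (fun i => ∑ α : R, h i α) (fun j => ∑ S ∈ Ej H j, z j S) v with hF
  have hadj : ∀ u v, (SimpleGraph.fromRel (fun x y : Fin n ⊕ Fin m =>
      ∃ i j, x = Sum.inl i ∧ y = Sum.inr j ∧ H j i ≠ 0)).Adj u v → F u = F v := by
    intro u v huv
    rw [SimpleGraph.fromRel_adj] at huv
    rcases huv.2 with ⟨i, j, rfl, rfl, hij⟩ | ⟨i, j, rfl, rfl, hij⟩
    · exact key j i hij
    · exact (key j i hij).symm
  have hconst : ∀ i i' : Fin n, ∑ α : R, h i α = ∑ α : R, h i' α := by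
    intro i i'
    exact const_of_connected' hconn hadj (Sum.inl i) (Sum.inl i')
  set i₀ : Fin n := ⟨0, hn⟩
  refine ⟨(∑ α : R, h i₀ α).toNat, fun i => ?_⟩
  rw [hconst i i₀, Int.toNat_of_nonneg (Finset.sum_nonneg fun α _ => hnn i₀ α)]
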